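/- Let G be a finite 2-group containing a cyclic subgroup of index 4. Then the second derived subgroup G'' is contained in the center Z(G). -/

import Mathlib

open Subgroup
open scoped commutatorElement

/-- If conjugation by every element sends `x` to a power of `x`, then every commutator
commutes with `x`. -/
private lemma commutator_mul_comm_of_conj_pow {G : Type*} [Group G] (x : G)
    (hx : ∀ t : G, ∃ a : ℤ, t * x * t⁻¹ = x ^ a) (g h : G) :
    ⁅g, h⁆ * x = x * ⁅g, h⁆ := by
  have key : ∀ t : G, ∀ a : ℤ, t * x * t⁻¹ = x ^ a → ∀ k : ℤ, t * x ^ k * t⁻¹ = x ^ (a * k) := by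
    intro t a hta k
    have h1 : t * x ^ k * t⁻¹ = (t * x * t⁻¹) ^ k := by
      simp
    rw [h1, hta, ← zpow_mul]
  obtain ⟨a, ha⟩ := hx g
  obtain ⟨b, hb⟩ := hx h
  obtain ⟨a', ha'⟩ := hx g⁻¹
  obtain ⟨b', hb'⟩ := hx h⁻¹
  have haa' : x ^ (a * a') = x := by
    have h2 := key g a ha a'
    rw [← ha'] at h2
    rw [← h2]; group
  have hbb' : x ^ (b * b') = x := by
    have h2 := key h b hb b'
    rw [← hb'] at h2
    rw [← h2]; group
  have e2 : g⁻¹ * x ^ b' * g⁻¹⁻¹ = x ^ (a' * b') := key g⁻¹ a' ha' b'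
  have e3 : h * x ^ (a' * b') * h⁻¹ = x ^ (b * (a' * b')) := key h b hb _
  have e4 : g * x ^ (b * (a' * b')) * g⁻¹ = x ^ (a * (b * (a' * b'))) := key g a ha _
  have hexp : x ^ (a * (b * (a' * b'))) = x := by
    have hring : a * (b * (a' * b')) = a * a' * (b * b') := by ring
    rw [hring, zpow_mul, haa', hbb']
  have hfinal : ⁅g, h⁆ * x * ⁅g, h⁆⁻¹ = x := by
    calc ⁅g, h⁆ * x * ⁅g, h⁆⁻¹
        = g * (h * (g⁻¹ * (h⁻¹ * x * h⁻¹⁻¹) * g⁻¹⁻¹) * h⁻¹) * g⁻¹ := by group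
      _ = x := by rw [hb', e2, e3, e4, hexp]
  exact mul_inv_eq_iff_eq_mul.mp hfinal

/-- The commutator subgroup of a group of order dividing 8 is cyclic. -/
private lemma isCyclic_commutator_of_card_dvd_eight {Q : Type*} [Group Q] [Finite Q]
    (hdvd : Nat.card Q ∣ 8) : IsCyclic ↥(commutator Q) := by
  haveI : Fact (Nat.Prime 2) := ⟨by norm_num⟩
  by_cases habel : ∀ a b : Q, a * b = b * a
  · have hbot : commutator Q = ⊥ := by
      rw [commutator_def, eq_bot_iff, Subgroup.commutator_le]
      intro g _ h _
      rw [Subgroup.mem_bot, commutatorElement_eq_one_iff_mul_comm]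
      exact habel g h
    rw [hbot]; infer_instance
  · -- Q is nonabelian, hence card Q = 8
    have h8 : Nat.card Q = 8 := by
      obtain ⟨n, hn⟩ := (Nat.dvd_prime_pow Nat.prime_two).mp
        (show Nat.card Q ∣ 2 ^ 3 by norm_num [hdvd])
      obtain ⟨hn3, hcard⟩ := hn
      interval_cases n
      · exfalso
        rw [pow_zero] at hcard
        haveI : Subsingleton Q := (Nat.card_eq_one_iff_unique.mp hcard).1
        exact habel fun a b => Subsingleton.elim _ _
      · exfalso
        haveI : IsCyclic Q := isCyclic_of_prime_card (p := 2) (by rw [pow_one] at hcard; exact hcard)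
        letI c : CommGroup Q := IsCyclic.commGroup
        exact habel c.mul_comm
      · exact absurd (IsPGroup.commutative_of_card_eq_prime_sq (p := 2) hcard) habel
      · rw [hcard]; norm_num
    haveI : Nontrivial Q := by
      have h1 : 1 < Nat.card Q := by omega
      exact Finite.one_lt_card_iff_nontrivial.mp h1
    have h2Q : IsPGroup 2 Q := IsPGroup.of_card (n := 3) (by norm_num [h8])
    haveI hZnt : Nontrivial (center Q) := h2Q.center_nontrivial
    have hZdvd : Nat.card (center Q) ∣ 8 := h8 ▸ card_subgroup_dvd_card _
    have hZ1 : 1 < Nat.card (center Q) := Finite.one_lt_card_iff_nontrivial.mpr hZnt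
    have hmul : Nat.card (Q ⧸ center Q) * Nat.card (center Q) = 8 := by
      rw [← Subgroup.card_eq_card_quotient_mul_card_subgroup, h8]
    -- if the quotient by the center is cyclic, contradiction with nonabelian
    have hnotcyc : ¬ IsCyclic (Q ⧸ center Q) := by
      intro hcyc
      exact habel fun a b => commutative_of_cyclic_center_quotient (QuotientGroup.mk' (center Q))
        (QuotientGroup.ker_mk' (center Q)).le a b
    have hZ2 : Nat.card (center Q) = 2 := by
      obtain ⟨k, hk3, hck⟩ := (Nat.dvd_prime_pow Nat.prime_two).mp
        (show Nat.card (center Q) ∣ 2 ^ 3 by norm_num [hZdvd])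
      interval_cases k
      · rw [pow_zero] at hck; omega
      · rw [pow_one] at hck; exact hck
      · exfalso
        rw [hck] at hmul
        norm_num at hmul
        have hq : Nat.card (Q ⧸ center Q) = 2 := by omega
        exact hnotcyc (isCyclic_of_prime_card (p := 2) hq)
      · exfalso
        rw [hck] at hmul
        norm_num at hmul
        have hq1 : Nat.card (Q ⧸ center Q) = 1 := by omega
        haveI : Subsingleton (Q ⧸ center Q) := (Nat.card_eq_one_iff_unique.mp hq1).1
        exact hnotcyc inferInstance
    have hq4 : Nat.card (Q ⧸ center Q) = 2 ^ 2 := by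
      rw [hZ2] at hmul; norm_num; omega
    letI : CommGroup (Q ⧸ center Q) := IsPGroup.commGroupOfCardEqPrimeSq (p := 2) hq4
    have hle : commutator Q ≤ center Q := by
      have := Abelianization.commutator_subset_ker (QuotientGroup.mk' (center Q))
      rwa [QuotientGroup.ker_mk'] at this
    haveI : IsCyclic (center Q) := isCyclic_of_prime_card (p := 2) hZ2
    exact Subgroup.isCyclic_of_le hle

theorem two_group_cyclic_index_four {G : Type*} [Group G] [Fintype G]
    (h2 : IsPGroup 2 G) (H : Subgroup G) (hHcyc : IsCyclic H) (hidx : H.index = 4) :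
    derivedSeries G 2 ≤ Subgroup.center G := by
  haveI : Fact (Nat.Prime 2) := ⟨by norm_num⟩
  set N := H.normalCore with hN
  haveI hNnormal : N.Normal := H.normalCore_normal
  have hNle : N ≤ H := H.normalCore_le
  have hNcyc : IsCyclic N := Subgroup.isCyclic_of_le hNle
  -- a generator of N
  obtain ⟨⟨x, hxN⟩, hxgen⟩ := hNcyc.exists_generator
  have hxprop : ∀ t : G, ∃ a : ℤ, t * x * t⁻¹ = x ^ a := by
    intro t
    have hmem : t * x * t⁻¹ ∈ N := hNnormal.conj_mem x hxN t
    obtain ⟨a, ha⟩ := Subgroup.mem_zpowers_iff.mp (hxgen ⟨t * x * t⁻¹, hmem⟩)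
    refine ⟨a, ?_⟩
    have := congrArg (Subtype.val) ha
    simpa using this.symm
  -- every commutator centralizes N
  have hcent : commutator G ≤ Subgroup.centralizer (N : Set G) := by
    rw [commutator_def, Subgroup.commutator_le]
    intro g _ h _
    rw [Subgroup.mem_centralizer_iff]
    intro n hn
    obtain ⟨k, hk⟩ := Subgroup.mem_zpowers_iff.mp (hxgen ⟨n, hn⟩)
    have hxc : ⁅g, h⁆ * x = x * ⁅g, h⁆ := commutator_mul_comm_of_conj_pow x hxprop g h
    have hn' : x ^ k = n := by
      have := congrArg (Subtype.val) hk
      simpa using this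
    rw [← hn']
    exact ((Commute.zpow_right hxc k) : ⁅g, h⁆ * x ^ k = x ^ k * ⁅g, h⁆).symm
  -- the quotient G / N has order dividing 8
  have hQ2 : IsPGroup 2 (G ⧸ N) := h2.to_quotient N
  have hQcard : Nat.card (G ⧸ N) ∣ 8 := by
    have hker : N = (MulAction.toPermHom G (G ⧸ H)).ker := H.normalCore_eq_ker
    have hidx' : N.index = Nat.card (MulAction.toPermHom G (G ⧸ H)).range := by
      rw [hker]; exact index_ker _
    have hcard4 : Nat.card (G ⧸ H) = 4 := by rw [← Subgroup.index_eq_card, hidx]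
    haveI : DecidableEq (G ⧸ H) := Classical.decEq _
    haveI : Fintype (G ⧸ H) := Fintype.ofFinite _
    have hperm : Nat.card (Equiv.Perm (G ⧸ H)) = 24 := by
      rw [Nat.card_eq_fintype_card, Fintype.card_perm, ← Nat.card_eq_fintype_card, hcard4]
      norm_num [Nat.factorial]
    have h24 : Nat.card (G ⧸ N) ∣ 24 := by
      rw [← Subgroup.index_eq_card, hidx', ← hperm]
      exact card_subgroup_dvd_card _
    obtain ⟨n, hn⟩ := IsPGroup.iff_card.mp hQ2
    rw [hn] at h24 ⊢
    have hn3 : n ≤ 3 := by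
      by_contra hgt
      have h16 : (2 : ℕ) ^ 4 ∣ 2 ^ n := Nat.pow_dvd_pow 2 (by omega)
      have := h16.trans h24
      norm_num at this
    exact (Nat.pow_dvd_pow 2 hn3).trans (by norm_num)
  haveI hQcyc : IsCyclic ↥(commutator (G ⧸ N)) := isCyclic_commutator_of_card_dvd_eight hQcard
  -- restrict the quotient map to the commutator subgroup
  set π := QuotientGroup.mk' N with hπ
  have hmapin : ∀ k : G, k ∈ commutator G → π k ∈ commutator (G ⧸ N) := by
    intro k hk
    have hmaple : (commutator G).map π ≤ commutator (G ⧸ N) := by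
      rw [_root_.commutator_def, _root_.commutator_def, Subgroup.map_commutator]
      exact Subgroup.commutator_mono le_top le_top
    exact hmaple (Subgroup.mem_map_of_mem π hk)
  set f : ↥(commutator G) →* ↥(commutator (G ⧸ N)) :=
    (π.comp (commutator G).subtype).codRestrict _ (fun k => hmapin k k.2) with hf
  have hker : f.ker ≤ Subgroup.center ↥(commutator G) := by
    intro k hk
    have hkN : (k : G) ∈ N := by
      have h1 : f k = 1 := hk
      have h2 : π (k : G) = 1 := congrArg Subtype.val h1
      have := MonoidHom.mem_ker.mpr h2
      rwa [QuotientGroup.ker_mk' N] at this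
    rw [Subgroup.mem_center_iff]
    intro m
    apply Subtype.ext
    show (m : G) * k = k * m
    exact (Subgroup.mem_centralizer_iff.mp (hcent m.2) k hkN).symm
  have hcommutative : ∀ a b : ↥(commutator G), a * b = b * a :=
    commutative_of_cyclic_center_quotient f hker
  -- conclude
  have hds : derivedSeries G 2 = ⁅derivedSeries G 1, derivedSeries G 1⁆ := derivedSeries_succ G 1
  rw [hds, Subgroup.commutator_le]
  intro p hp q hq
  rw [derivedSeries_one] at hp hq
  have hpq : p * q = q * p :=
    congrArg Subtype.val (hcommutative ⟨p, hp⟩ ⟨q, hq⟩)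
  have h1 : ⁅p, q⁆ = 1 := commutatorElement_eq_one_iff_mul_comm.mpr hpq
  rw [h1]
  exact (Subgroup.center G).one_mem
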